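/- Let θ be inner, g ∈ L^∞(T), and let φ, ψ be unimodular functions in L^∞(T) such that φK_θ ⊥ ψK_θ in L²(T); set M := φK_θ ⊕ ψK_θ and let A_g^M : M → M, f ↦ P_M(gf), where P_M is the orthogonal projection of L²(T) onto M. Then the map U : M → K_θ(D,C²), U(φf₁ + ψf₂) = (f₁,f₂)ᵀ, is unitary, and ker A_g^M = U*·ker A_G^θ, where A_G^θ is the operator on K_θ(D,C²) given by the matrix [[A_g^θ, A_{g·conj(φ)·ψ}^θ],[A_{g·conj(ψ)·φ}^θ, A_g^θ]]; in particular U(ker A_g^M) is a nearly S*-invariant subspace of H²(D,C²) with defect 2. -/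

import Mathlib

open MeasureTheory Complex Real
open scoped ENNReal ComplexConjugate

noncomputable section

namespace Paper

instance : Fact (0 < 2 * Real.pi) := ⟨by positivity⟩

abbrev Tc : Type := AddCircle (2 * Real.pi)
abbrev μ0 : MeasureTheory.Measure Tc := AddCircle.haarAddCircle
abbrev L2 : Type := MeasureTheory.Lp ℂ 2 μ0

def coeffCLM (n : ℤ) : L2 →L[ℂ] ℂ :=
  LinearMap.mkContinuous
    { toFun := fun f => fourierBasis.repr f n
      map_add' := fun f g => by simp
      map_smul' := fun c f => by simp }
    1
    (fun f => by
      have h := lp.norm_apply_le_norm (p := 2) (by norm_num) (fourierBasis.repr f) n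
      simpa using h)

def cf (f : L2) (n : ℤ) : ℂ := coeffCLM n f

/-- The subspace of `L²(𝕋)` of functions whose Fourier coefficients of index `< k` vanish.
Thus `coeffGE 0 = H²` and `coeffGE k = zᵏH²` for `k ≥ 0`. -/
def coeffGE (k : ℤ) : Submodule ℂ L2 :=
  ⨅ (n : ℤ) (_ : n < k), LinearMap.ker (coeffCLM n : L2 →ₗ[ℂ] ℂ)

/-- The subspace of `L²(𝕋)` of functions whose Fourier coefficients of index `≥ k` vanish.
Thus `coeffLT 0 = conj (H²₀) = (H²)^⊥`. -/
def coeffLT (k : ℤ) : Submodule ℂ L2 :=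
  ⨅ (n : ℤ) (_ : k ≤ n), LinearMap.ker (coeffCLM n : L2 →ₗ[ℂ] ℂ)

/-- The Hardy space `H²` of the unit disc, viewed as a subspace of `L²(𝕋)`. -/
def H2 : Submodule ℂ L2 := coeffGE 0

lemma mem_coeffGE {k : ℤ} {f : L2} : f ∈ coeffGE k ↔ ∀ n < k, cf f n = 0 := by
  simp [coeffGE, cf, Submodule.mem_iInf, LinearMap.mem_ker]

lemma isClosed_coeffGE (k : ℤ) : IsClosed ((coeffGE k : Submodule ℂ L2) : Set L2) := by
  have h : ((coeffGE k : Submodule ℂ L2) : Set L2)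
      = ⋂ (n : ℤ) (_ : n < k), (LinearMap.ker (coeffCLM n : L2 →ₗ[ℂ] ℂ) : Set L2) := by
    ext f
    simp [coeffGE, Submodule.mem_iInf, Set.mem_iInter]
  rw [h]
  exact isClosed_iInter fun n => isClosed_iInter fun _ => ContinuousLinearMap.isClosed_ker (coeffCLM n)

end Paper
namespace Paper

open scoped Classical in
/-- Multiplication by an `L^∞` function, as a linear map on `L²(𝕋)` (defined to be `0` if the
symbol is not essentially bounded). -/
def mulLM (g : Tc → ℂ) : L2 →ₗ[ℂ] L2 :=
  if hg : MemLp g ⊤ μ0 then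
    { toFun := fun f => ((Lp.memLp f).smul (r := 2) hg).toLp (g • ⇑f)
      map_add' := fun f₁ f₂ => by
        apply Lp.ext
        filter_upwards [MemLp.coeFn_toLp ((Lp.memLp (f₁ + f₂)).smul (r := 2) hg),
          MemLp.coeFn_toLp ((Lp.memLp f₁).smul (r := 2) hg),
          MemLp.coeFn_toLp ((Lp.memLp f₂).smul (r := 2) hg),
          Lp.coeFn_add f₁ f₂,
          Lp.coeFn_add (((Lp.memLp f₁).smul (r := 2) hg).toLp (g • ⇑f₁))
            (((Lp.memLp f₂).smul (r := 2) hg).toLp (g • ⇑f₂))] with x h0 h1 h2 h3 h4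
        rw [h0, h4, Pi.add_apply, h1, h2]
        simp only [Pi.smul_apply', Pi.add_apply, h3, smul_add]
      map_smul' := fun c f => by
        apply Lp.ext
        filter_upwards [MemLp.coeFn_toLp ((Lp.memLp (c • f)).smul (r := 2) hg),
          MemLp.coeFn_toLp ((Lp.memLp f).smul (r := 2) hg),
          Lp.coeFn_smul c f,
          Lp.coeFn_smul c (((Lp.memLp f).smul (r := 2) hg).toLp (g • ⇑f))] with x h0 h1 h3 h4
        simp only [RingHom.id_apply]
        rw [h0, h4, Pi.smul_apply, h1]
        simp only [Pi.smul_apply', Pi.smul_apply, h3]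
        exact smul_comm _ _ _ }
  else 0

end Paper
namespace Paper

/-- The orthogonal projection of `L²(𝕋)` onto a closed subspace, as a map `L² → L²`. -/
def projCLM (U : Submodule ℂ L2) (hU : IsClosed (U : Set L2)) : L2 →L[ℂ] L2 :=
  letI : CompleteSpace U := hU.completeSpace_coe
  U.subtypeL.comp U.orthogonalProjectionOnto

/-- The subspace `θH²` of `L²(𝕋)`. -/
def thetaH2 (θ : Tc → ℂ) : Submodule ℂ L2 := H2.map (mulLM θ)

/-- The model space `K_θ = H² ⊖ θH²`. -/
def Kmod (θ : Tc → ℂ) : Submodule ℂ L2 := H2 ⊓ (thetaH2 θ)ᗮ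

lemma isClosed_Kmod (θ : Tc → ℂ) : IsClosed ((Kmod θ : Submodule ℂ L2) : Set L2) :=
  (isClosed_coeffGE 0).inter (thetaH2 θ).isClosed_orthogonal

/-- The orthogonal projection `P_θ : L² → K_θ` (composed with the inclusion back into `L²`). -/
def Ptheta (θ : Tc → ℂ) : L2 →L[ℂ] L2 := projCLM (Kmod θ) (isClosed_Kmod θ)

/-- The orthogonal projection `P₊ : L² → H²`. -/
def Pplus : L2 →L[ℂ] L2 := projCLM H2 (isClosed_coeffGE 0)

/-- The independent variable `z = e^{it}`, as a function on the circle. -/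
def zf : Tc → ℂ := fun x => fourier 1 x

/-- The conjugate variable `z̄ = e^{-it}`. -/
def zbar : Tc → ℂ := fun x => fourier (-1) x

lemma memLp_fourier (n : ℤ) : MemLp (fun x : Tc => (fourier n x : ℂ)) ⊤ μ0 := by
  refine memLp_top_of_bound ((fourier n).continuous.aestronglyMeasurable) 1 ?_
  exact Filter.Eventually.of_forall fun x => le_of_eq (Circle.norm_coe _)

lemma memLp_zf : MemLp zf ⊤ μ0 := memLp_fourier 1

lemma memLp_zbar : MemLp zbar ⊤ μ0 := memLp_fourier (-1)

/-- The backward shift `S* : f ↦ (f - f(0))/z`, realised on `L²(𝕋)` as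
`f ↦ P₊(z̄ f)`; on `H²` this is the usual backward shift. -/
def Sstar : L2 →ₗ[ℂ] L2 := (Pplus : L2 →ₗ[ℂ] L2).comp (mulLM zbar)

/-- `θ` is an inner function: it is essentially bounded, unimodular a.e. on the circle, and
all its negative Fourier coefficients vanish (i.e. it is the boundary function of a bounded
analytic function on the disc). -/
structure IsInner (θ : Tc → ℂ) : Prop where
  memLinf : MemLp θ ⊤ μ0
  unimodular : ∀ᵐ x ∂μ0, ‖θ x‖ = 1
  analytic : ∀ n : ℤ, n < 0 → fourierCoeff θ n = 0

/-- Pointwise complex conjugation of a function on the circle. -/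
def conjFun (f : Tc → ℂ) : Tc → ℂ := fun x => (starRingEnd ℂ) (f x)

lemma memLp_conj {f : Tc → ℂ} {p : ℝ≥0∞} (hf : MemLp f p μ0) : MemLp (conjFun f) p μ0 := by
  refine ⟨continuous_star.comp_aestronglyMeasurable hf.1, ?_⟩
  have h : eLpNorm (conjFun f) p μ0 = eLpNorm f p μ0 :=
    eLpNorm_congr_norm_ae (Filter.Eventually.of_forall fun x => by
      simp [conjFun])
  rw [h]
  exact hf.2

/-- Complex conjugation on `L²(𝕋)`. -/
def conjL2 (f : L2) : L2 := (memLp_conj (Lp.memLp f)).toLp (conjFun ⇑f)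

end Paper
namespace Paper

/-- The set `w·U = {h ∈ L² : h = w·k (a.e.) for some k ∈ U}`, for a fixed function `w` on the
circle and a subspace `U ⊆ L²`; this is a (not necessarily closed) subspace of `L²`. -/
def mulSet (w : Tc → ℂ) (U : Submodule ℂ L2) : Submodule ℂ L2 where
  carrier := {h : L2 | ∃ k ∈ U, (⇑h : Tc → ℂ) =ᵐ[μ0] fun x => w x * (⇑k : Tc → ℂ) x}
  add_mem' := by
    rintro a b ⟨k₁, hk₁, ha⟩ ⟨k₂, hk₂, hb⟩
    refine ⟨k₁ + k₂, U.add_mem hk₁ hk₂, ?_⟩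
    filter_upwards [ha, hb, Lp.coeFn_add a b, Lp.coeFn_add k₁ k₂] with x h1 h2 h3 h4
    simp only [h3, Pi.add_apply, h1, h2, h4, mul_add]
  zero_mem' := by
    refine ⟨0, U.zero_mem, ?_⟩
    filter_upwards [Lp.coeFn_zero ℂ 2 μ0] with x h1
    simp [h1]
  smul_mem' := by
    rintro c a ⟨k, hk, ha⟩
    refine ⟨c • k, U.smul_mem c hk, ?_⟩
    filter_upwards [ha, Lp.coeFn_smul c a, Lp.coeFn_smul c k] with x h1 h2 h3
    simp only [h2, Pi.smul_apply, h1, h3, smul_eq_mul]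
    ring

/-- `f` is an outer function: `f ∈ H²` and the polynomial multiples of `f` are dense in `H²`
(i.e. `f` is cyclic for the forward shift). -/
def IsOuter (f : L2) : Prop :=
  f ∈ H2 ∧
    (Submodule.span ℂ (Set.range fun k : ℕ => ((mulLM zf) ^ k) f)).topologicalClosure = H2

/-- `h` is a cyclic vector for the backward shift `S*` on `H²`. -/
def CyclicSstar (h : L2) : Prop :=
  (Submodule.span ℂ (Set.range fun k : ℕ => (Sstar ^ k) h)).topologicalClosure = H2

/-- `d` divides `u` in the sense of inner functions. -/
def InnerDvd (d u : Tc → ℂ) : Prop :=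
  ∃ v : Tc → ℂ, IsInner v ∧ ∀ᵐ x ∂μ0, u x = d x * v x

/-- Two inner functions have greatest common inner divisor `1`, i.e. every common inner
divisor is a (necessarily unimodular) constant. -/
def CoprimeInner (u₁ u₂ : Tc → ℂ) : Prop :=
  ∀ d : Tc → ℂ, IsInner d → InnerDvd d u₁ → InnerDvd d u₂ → ∃ c : ℂ, ∀ᵐ x ∂μ0, d x = c

/-- The kernel of the truncated Toeplitz operator `A_g^θ = P_θ (g ·) : K_θ → K_θ`:
`f ∈ ker A_g^θ` iff `f ∈ K_θ` and `g f ⊥ K_θ`. -/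
def kerA (θ g : Tc → ℂ) : Submodule ℂ L2 :=
  Kmod θ ⊓ ((Kmod θ)ᗮ).comap (mulLM g)

/-- The kernel of the dual truncated Toeplitz operator `D_g^θ = Q (g ·) : K_θ^⊥ → K_θ^⊥`:
`f ∈ ker D_g^θ` iff `f ∈ K_θ^⊥` and `g f ⊥ K_θ^⊥`. -/
def kerD (θ g : Tc → ℂ) : Submodule ℂ L2 :=
  (Kmod θ)ᗮ ⊓ (((Kmod θ)ᗮ)ᗮ).comap (mulLM g)

/-- The space `A = {f ∈ ker D_g^θ : gf ∈ K_θ ∩ zH²}`. -/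
def dualA (θ g : Tc → ℂ) : Submodule ℂ L2 :=
  kerD θ g ⊓ (Kmod θ ⊓ coeffGE 1).comap (mulLM g)

/-- The space `C = ker D_g^θ ∩ (conj H²₀ ⊕ θzH²) ∩ A`. -/
def dualC (θ g : Tc → ℂ) : Submodule ℂ L2 :=
  kerD θ g ⊓ (coeffLT 0 ⊔ (coeffGE 1).map (mulLM θ)) ⊓ dualA θ g

end Paper
namespace Paper

/-- The vector-valued space `L²(𝕋, ℂⁿ)`, realised as an `ℓ²`-direct sum of `n` copies of
`L²(𝕋)`; the subspace `H2v n` below is the vector-valued Hardy space `H²(𝔻, ℂⁿ)`. -/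
abbrev Vec (n : ℕ) : Type := PiLp 2 (fun _ : Fin n => L2)

/-- The `i`-th component, as a linear map `L²(𝕋, ℂⁿ) → L²(𝕋)`. -/
def compLM {n : ℕ} (i : Fin n) : Vec n →ₗ[ℂ] L2 where
  toFun F := F i
  map_add' F G := rfl
  map_smul' c F := rfl

/-- Vector-valued analogue of `coeffGE`: `coeffGEv n 0 = H²(𝔻, ℂⁿ)` and
`coeffGEv n 1 = zH²(𝔻, ℂⁿ)`. -/
def coeffGEv (n : ℕ) (k : ℤ) : Submodule ℂ (Vec n) :=
  ⨅ i : Fin n, (coeffGE k).comap (compLM i)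

/-- The vector-valued Hardy space `H²(𝔻, ℂⁿ)`. -/
def H2v (n : ℕ) : Submodule ℂ (Vec n) := coeffGEv n 0

/-- The vector-valued model space `K_θ(𝔻, ℂⁿ)` (all components in `K_θ`). -/
def Kv (θ : Tc → ℂ) (n : ℕ) : Submodule ℂ (Vec n) :=
  ⨅ i : Fin n, (Kmod θ).comap (compLM i)

/-- Evaluation at the origin, `F ↦ F(0)`, for (Hardy-space) elements of `L²(𝕋, ℂⁿ)`. -/
def ev0 {n : ℕ} (F : Vec n) : EuclideanSpace ℂ (Fin n) := WithLp.toLp 2 (fun i => cf (F i) 0)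

/-- Evaluation at the origin as a linear map `H²(𝔻, ℂⁿ) → ℂⁿ`. -/
def ev0LM (n : ℕ) : Vec n →ₗ[ℂ] EuclideanSpace ℂ (Fin n) where
  toFun := ev0
  map_add' _F _G := by
    ext i
    simp [ev0, cf]
  map_smul' _c _F := by
    ext i
    simp [ev0, cf]

/-- The componentwise backward shift on `L²(𝕋, ℂⁿ)`. -/
def SstarV {n : ℕ} : Vec n →ₗ[ℂ] Vec n where
  toFun F := WithLp.toLp 2 (fun i => Sstar (F i))
  map_add' _F _G := by
    ext i
    simp
  map_smul' _c _F := by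
    ext i
    simp

/-- Componentwise multiplication by a scalar `L^∞` function on `L²(𝕋, ℂⁿ)`. -/
def mulVLM (g : Tc → ℂ) {n : ℕ} : Vec n →ₗ[ℂ] Vec n where
  toFun F := WithLp.toLp 2 (fun i => mulLM g (F i))
  map_add' _F _G := by
    ext i
    simp
  map_smul' _c _F := by
    ext i
    simp

/-- The projection onto the first `i` coordinates, `P_i : H²(𝔻, ℂⁿ) → H²(𝔻, ℂⁱ)`. -/
def projLE {n i : ℕ} (h : i ≤ n) : Vec n →ₗ[ℂ] Vec i where
  toFun F := WithLp.toLp 2 (fun j => F (Fin.castLE h j))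
  map_add' F G := rfl
  map_smul' c F := rfl

/-- The `i`-th row of a matrix symbol applied to a vector function:
`F ↦ ∑ j, G i j • F j`. -/
def rowLM {n : ℕ} (G : Matrix (Fin n) (Fin n) (Tc → ℂ)) (i : Fin n) : Vec n →ₗ[ℂ] L2 :=
  ∑ j : Fin n, (mulLM (G i j)).comp (compLM j)

/-- The kernel of the block Toeplitz operator `T_G = P₊(G ·)` on `H²(𝔻, ℂⁿ)`:
`F ∈ ker T_G` iff `F ∈ H²(𝔻, ℂⁿ)` and every component of `GF` is orthogonal to `H²`. -/
def kerT {n : ℕ} (G : Matrix (Fin n) (Fin n) (Tc → ℂ)) : Submodule ℂ (Vec n) :=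
  H2v n ⊓ ⨅ i : Fin n, (H2ᗮ).comap (rowLM G i)

/-- The kernel of the matrix truncated Toeplitz operator `A_G^θ = P_θ(G ·)` on `K_θ(𝔻, ℂ²)`. -/
def kerAv (θ : Tc → ℂ) (G : Matrix (Fin 2) (Fin 2) (Tc → ℂ)) : Submodule ℂ (Vec 2) :=
  Kv θ 2 ⊓ ⨅ i : Fin 2, ((Kmod θ)ᗮ).comap (rowLM G i)

/-- The scalar-type space `w·U ⊆ L²(𝕋, ℂⁿ)`, for a fixed vector function `w` and a
subspace `U ⊆ L²(𝕋)` of scalar functions. -/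
def vecMulSet {n : ℕ} (w : Vec n) (U : Submodule ℂ L2) : Submodule ℂ (Vec n) where
  carrier := {F | ∃ k ∈ U, ∀ i : Fin n,
    (⇑(F i) : Tc → ℂ) =ᵐ[μ0] fun x => (⇑(w i) : Tc → ℂ) x * (⇑k : Tc → ℂ) x}
  add_mem' := by
    rintro a b ⟨k₁, hk₁, ha⟩ ⟨k₂, hk₂, hb⟩
    refine ⟨k₁ + k₂, U.add_mem hk₁ hk₂, fun i => ?_⟩
    have hab : (a + b) i = a i + b i := rfl
    rw [hab]
    filter_upwards [ha i, hb i, Lp.coeFn_add (a i) (b i), Lp.coeFn_add k₁ k₂]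
      with x h1 h2 h3 h4
    simp only [h3, Pi.add_apply, h1, h2, h4, mul_add]
  zero_mem' := by
    refine ⟨0, U.zero_mem, fun i => ?_⟩
    have h0 : (0 : Vec n) i = 0 := rfl
    rw [h0]
    filter_upwards [Lp.coeFn_zero ℂ 2 μ0] with x h1
    simp [h1]
  smul_mem' := by
    rintro c a ⟨k, hk, ha⟩
    refine ⟨c • k, U.smul_mem c hk, fun i => ?_⟩
    have hc : (c • a) i = c • (a i) := rfl
    rw [hc]
    filter_upwards [ha i, Lp.coeFn_smul c (a i), Lp.coeFn_smul c k] with x h1 h2 h3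
    simp only [h2, Pi.smul_apply, h1, h3, smul_eq_mul]
    ring

end Paper
namespace Paper

/-- The representation `F = F₀ k₀ + z ∑ⱼ kⱼ eⱼ` of Theorem 3.4(1): here the columns of `F₀`
are `W 0, …, W (r-1)`, the `eⱼ` are an orthonormal basis of the defect space, and the
parameter `k = (k₀, k₁, …, k_m)` runs through a subspace of `H²(𝔻, ℂ^{r+m})`. -/
def rep1 {n r m : ℕ} (W : Fin r → Vec n) (e : Fin m → Vec n) (k : Vec (r + m)) (F : Vec n) :
    Prop :=
  ∀ i : Fin n,
    (⇑(F i) : Tc → ℂ) =ᵐ[μ0] fun x =>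
      (∑ j : Fin r, (⇑(k (Fin.castAdd m j)) : Tc → ℂ) x * (⇑(W j i) : Tc → ℂ) x) +
        zf x * ∑ j : Fin m, (⇑(k (Fin.natAdd r j)) : Tc → ℂ) x * (⇑(e j i) : Tc → ℂ) x

/-- The representation `F = z ∑ⱼ kⱼ eⱼ` of Theorem 3.4(2). -/
def rep2 {n m : ℕ} (e : Fin m → Vec n) (k : Vec m) (F : Vec n) : Prop :=
  ∀ i : Fin n,
    (⇑(F i) : Tc → ℂ) =ᵐ[μ0] fun x =>
      zf x * ∑ j : Fin m, (⇑(k j) : Tc → ℂ) x * (⇑(e j i) : Tc → ℂ) x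

end Paper
namespace Paper

/-- The multiband space `M = φK_θ ⊕ ψK_θ ⊆ L²(𝕋)`. -/
def multiband (θ φ ψ : Tc → ℂ) : Submodule ℂ L2 :=
  (Kmod θ).map (mulLM φ) ⊔ (Kmod θ).map (mulLM ψ)

/-- The kernel of the truncated Toeplitz operator `A_g^M = P_M(g ·) : M → M` on the
multiband space `M = φK_θ ⊕ ψK_θ`. -/
def kerAM (θ φ ψ g : Tc → ℂ) : Submodule ℂ L2 :=
  multiband θ φ ψ ⊓ ((multiband θ φ ψ)ᗮ).comap (mulLM g)

/-- The matrix symbol `[[g, g·conj φ·ψ], [g·conj ψ·φ, g]]` of Section 6. -/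
def Gmb (g φ ψ : Tc → ℂ) : Matrix (Fin 2) (Fin 2) (Tc → ℂ) :=
  !![g, fun x => g x * conjFun φ x * ψ x;
     fun x => g x * conjFun ψ x * φ x, g]

section Tool
open scoped InnerProductSpace
variable {a b θ : Tc → ℂ}

set_option maxHeartbeats 1000000 in
lemma memLp_mul (ha : MemLp a ⊤ μ0) (hb : MemLp b ⊤ μ0) :
    MemLp (fun x => a x * b x) ⊤ μ0 := by
  have h := hb.smul (r := ⊤) ha
  exact h

lemma mulLM_coeFn (ha : MemLp a ⊤ μ0) (f : L2) :
    ⇑(mulLM a f) =ᵐ[μ0] fun x => a x * f x := by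
  rw [mulLM, dif_pos ha]
  simp only [LinearMap.coe_mk, AddHom.coe_mk]
  filter_upwards [MemLp.coeFn_toLp ((Lp.memLp f).smul (r := 2) ha)] with x hx
  exact hx.trans rfl

lemma mulLM_mulLM (ha : MemLp a ⊤ μ0) (hb : MemLp b ⊤ μ0) (f : L2) :
    mulLM a (mulLM b f) = mulLM (fun x => a x * b x) f := by
  apply Lp.ext
  filter_upwards [mulLM_coeFn ha (mulLM b f), mulLM_coeFn hb f,
    mulLM_coeFn (memLp_mul ha hb) f] with x h1 h2 h3
  rw [h1, h2, h3, mul_assoc]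

lemma conjFun_conjFun : conjFun (conjFun a) = a := by
  funext x; simp [conjFun]

lemma inner_L2 (f g : L2) : ⟪f, g⟫_ℂ = ∫ x, conj (f x) * g x ∂μ0 := by
  rw [MeasureTheory.L2.inner_def]
  exact integral_congr_ae (Filter.Eventually.of_forall fun x => by
    simp [RCLike.inner_apply, mul_comm])

lemma inner_mulLM_left (ha : MemLp a ⊤ μ0) (f g : L2) :
    ⟪mulLM a f, g⟫_ℂ = ⟪f, mulLM (conjFun a) g⟫_ℂ := by
  rw [inner_L2, inner_L2]
  refine integral_congr_ae ?_
  filter_upwards [mulLM_coeFn ha f, mulLM_coeFn (memLp_conj ha) g] with x h1 h2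
  rw [h1, h2]
  simp only [conjFun, map_mul]
  ring

lemma unimod_conj_mul {z : ℂ} (hz : ‖z‖ = 1) : conj z * z = 1 := by
  rw [RCLike.conj_mul, hz]; norm_num

lemma mulLM_conj_cancel (ha : MemLp a ⊤ μ0) (hau : ∀ᵐ x ∂μ0, ‖a x‖ = 1) (f : L2) :
    mulLM (conjFun a) (mulLM a f) = f := by
  rw [mulLM_mulLM (memLp_conj ha) ha]
  apply Lp.ext
  filter_upwards [mulLM_coeFn (memLp_mul (memLp_conj ha) ha) f, hau] with x h1 h2
  rw [h1]
  simp only [conjFun]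
  rw [unimod_conj_mul h2, one_mul]

lemma mulLM_cancel_conj (ha : MemLp a ⊤ μ0) (hau : ∀ᵐ x ∂μ0, ‖a x‖ = 1) (f : L2) :
    mulLM a (mulLM (conjFun a) f) = f := by
  have h := mulLM_conj_cancel (memLp_conj ha) ?_ f
  · rwa [conjFun_conjFun] at h
  · filter_upwards [hau] with x hx; simp [conjFun, hx]

lemma norm_mulLM (ha : MemLp a ⊤ μ0) (hau : ∀ᵐ x ∂μ0, ‖a x‖ = 1) (f : L2) :
    ‖mulLM a f‖ = ‖f‖ := by
  rw [Lp.norm_def, Lp.norm_def]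
  congr 1
  refine eLpNorm_congr_norm_ae ?_
  filter_upwards [mulLM_coeFn ha f, hau] with x h1 h2
  rw [h1, norm_mul, h2, one_mul]

lemma continuous_mulLM (ha : MemLp a ⊤ μ0) : Continuous (mulLM a) := by
  have hb : ∀ f : L2, ‖mulLM a f‖ ≤ (eLpNorm a ⊤ μ0).toReal * ‖f‖ := by
    intro f
    rw [Lp.norm_def, Lp.norm_def]
    have h1 : eLpNorm (⇑(mulLM a f)) 2 μ0 = eLpNorm (a • (⇑f : Tc → ℂ)) 2 μ0 :=
      eLpNorm_congr_ae (by
        filter_upwards [mulLM_coeFn ha f] with x hx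
        exact hx.trans rfl)
    have h2 := eLpNorm_smul_le_eLpNorm_top_mul_eLpNorm 2 (Lp.aestronglyMeasurable f) a
    rw [← ENNReal.toReal_mul, h1]
    refine ENNReal.toReal_mono ?_ h2
    exact ENNReal.mul_ne_top ha.eLpNorm_ne_top (Lp.eLpNorm_ne_top f)
  exact AddMonoidHomClass.continuous_of_bound (mulLM a) _ hb

lemma cf_def (f : L2) (n : ℤ) : cf f n = fourierBasis.repr f n := rfl

lemma cf_eq (f : L2) (n : ℤ) : cf f n = fourierCoeff (⇑f) n := by
  rw [cf_def, fourierBasis_repr]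

lemma cf_add (f g : L2) (n : ℤ) : cf (f + g) n = cf f n + cf g n :=
  map_add (coeffCLM n) f g

lemma cf_sub (f g : L2) (n : ℤ) : cf (f - g) n = cf f n - cf g n :=
  map_sub (coeffCLM n) f g

lemma cf_smul (c : ℂ) (f : L2) (n : ℤ) : cf (c • f) n = c * cf f n :=
  map_smul (coeffCLM n) c f

lemma fourierCoeff_congr {f g : Tc → ℂ} (h : f =ᵐ[μ0] g) (n : ℤ) :
    fourierCoeff f n = fourierCoeff g n := by
  simp only [fourierCoeff]
  exact integral_congr_ae (by filter_upwards [h] with x hx; rw [hx])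

lemma cf_mulLM_zbar (f : L2) (n : ℤ) : cf (mulLM zbar f) n = cf f (n + 1) := by
  rw [cf_eq, cf_eq, fourierCoeff_congr (mulLM_coeFn memLp_zbar f)]
  simp only [fourierCoeff, smul_eq_mul]
  refine integral_congr_ae (Filter.Eventually.of_forall fun x => ?_)
  have h : fourier (-(n + 1)) x = fourier (-n) x * fourier (-1) x := by
    rw [← fourier_add]; congr 1; ring
  simp only [zbar, h]; ring

lemma cf_mulLM_zf (f : L2) (n : ℤ) : cf (mulLM zf f) n = cf f (n - 1) := by
  rw [cf_eq, cf_eq, fourierCoeff_congr (mulLM_coeFn memLp_zf f)]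
  simp only [fourierCoeff, smul_eq_mul]
  refine integral_congr_ae (Filter.Eventually.of_forall fun x => ?_)
  have h : fourier (-(n - 1)) x = fourier (-n) x * fourier 1 x := by
    rw [← fourier_add]; congr 1; ring
  simp only [zf, h]; ring

lemma inner_eq_tsum_cf (f g : L2) : ⟪f, g⟫_ℂ = ∑' n : ℤ, conj (cf f n) * cf g n := by
  rw [← fourierBasis.repr.inner_map_map f g, lp.inner_eq_tsum]
  exact tsum_congr fun n => by rw [RCLike.inner_apply, mul_comm]; rfl

lemma inner_zero_of_cf {f g : L2} (h : ∀ n, conj (cf f n) * cf g n = 0) :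
    ⟪f, g⟫_ℂ = 0 := by
  rw [inner_eq_tsum_cf]
  calc ∑' n : ℤ, conj (cf f n) * cf g n = ∑' n : ℤ, (0 : ℂ) := tsum_congr h
  _ = 0 := tsum_zero

def en (n : ℤ) : L2 := fourierLp 2 n

lemma en_coeFn (n : ℤ) : ⇑(en n) =ᵐ[μ0] fun x => fourier n x := coeFn_fourierLp 2 n

lemma cf_en (m n : ℤ) : cf (en m) n = if n = m then 1 else 0 := by
  rw [cf_def]
  have h : en m = fourierBasis m := by rw [en, coe_fourierBasis]
  rw [h, fourierBasis.repr_self]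
  by_cases hn : n = m
  · subst hn; rw [lp.single_apply_self, if_pos rfl]
  · rw [lp.single_apply_ne _ _ _ hn, if_neg hn]

lemma mem_H2_iff {f : L2} : f ∈ H2 ↔ ∀ n < 0, cf f n = 0 := mem_coeffGE

lemma en_mem_H2 {n : ℤ} (hn : 0 ≤ n) : en n ∈ H2 := by
  rw [mem_H2_iff]
  intro m hm
  rw [cf_en, if_neg (by omega)]

lemma mem_H2_orth_iff {f : L2} : f ∈ H2ᗮ ↔ ∀ n, 0 ≤ n → cf f n = 0 := by
  constructor
  · intro hf n hn
    have h0 : ⟪en n, f⟫_ℂ = 0 := (Submodule.mem_orthogonal _ _).1 hf _ (en_mem_H2 hn)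
    rw [inner_eq_tsum_cf, tsum_eq_single n (fun m hm => by rw [cf_en, if_neg hm]; simp)] at h0
    rw [cf_en, if_pos rfl] at h0
    simpa using h0
  · intro h
    rw [Submodule.mem_orthogonal]
    intro u hu
    refine inner_zero_of_cf fun n => ?_
    rcases lt_or_ge n 0 with hn | hn
    · rw [mem_H2_iff] at hu
      rw [hu n hn, map_zero, zero_mul]
    · rw [h n hn, mul_zero]

variable {θ : Tc → ℂ}

lemma cf_conjmul_en (hθ : MemLp θ ⊤ μ0) (n m : ℤ) :
    cf (mulLM (conjFun θ) (en n)) m = conj (fourierCoeff θ (n - m)) := by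
  rw [cf_eq]
  have h1 : ⇑(mulLM (conjFun θ) (en n)) =ᵐ[μ0] fun x => conj (θ x) * fourier n x := by
    filter_upwards [mulLM_coeFn (memLp_conj hθ) (en n), en_coeFn n] with x ha hb
    rw [ha, hb]; rfl
  rw [fourierCoeff_congr h1]
  simp only [fourierCoeff, smul_eq_mul]
  rw [← integral_conj]
  refine integral_congr_ae (Filter.Eventually.of_forall fun x => ?_)
  have e1 : conj ((fourier (-(n - m))) x) = fourier (n - m) x := by
    rw [fourier_neg, Complex.conj_conj]
  have e2 : fourier (n - m) x = fourier n x * fourier (-m) x := by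
    rw [← fourier_add, sub_eq_add_neg]
  simp only [smul_eq_mul, map_mul, e1, e2]
  ring

lemma inner_en_eq (hθ : MemLp θ ⊤ μ0) (f : L2) (n : ℤ) :
    cf (mulLM θ f) n = ⟪mulLM (conjFun θ) (en n), f⟫_ℂ := by
  rw [inner_L2, cf_eq]
  simp only [fourierCoeff, smul_eq_mul]
  refine integral_congr_ae ?_
  filter_upwards [mulLM_coeFn hθ f, mulLM_coeFn (memLp_conj hθ) (en n), en_coeFn n]
    with x h1 h2 h3
  rw [h1, h2, h3]
  simp only [conjFun, map_mul, Complex.conj_conj, fourier_neg]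
  ring

lemma mulLM_mem_H2 (hθ : IsInner θ) {f : L2} (hf : f ∈ H2) : mulLM θ f ∈ H2 := by
  rw [mem_H2_iff]
  intro n hn
  rw [inner_en_eq hθ.memLinf]
  refine inner_zero_of_cf fun m => ?_
  rcases lt_or_ge m 0 with hm | hm
  · rw [mem_H2_iff] at hf
    rw [hf m hm, mul_zero]
  · rw [cf_conjmul_en hθ.memLinf, hθ.analytic (n - m) (by omega)]
    simp

lemma zbar_mem_H2 {f : L2} (hf : f ∈ H2) (h0 : cf f 0 = 0) : mulLM zbar f ∈ H2 := by
  rw [mem_H2_iff] at hf ⊢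
  intro n hn
  rw [cf_mulLM_zbar]
  rcases lt_or_ge (n + 1) 0 with h | h
  · exact hf _ h
  · have : n + 1 = 0 := by omega
    rw [this]; exact h0

lemma zbar_mem_H2_orth {f : L2} (hf : f ∈ H2ᗮ) : mulLM zbar f ∈ H2ᗮ := by
  rw [mem_H2_orth_iff] at hf ⊢
  intro n hn
  rw [cf_mulLM_zbar]
  exact hf _ (by omega)

lemma zf_mem_H2 {f : L2} (hf : f ∈ H2) : mulLM zf f ∈ H2 := by
  rw [mem_H2_iff] at hf ⊢
  intro n hn
  rw [cf_mulLM_zf]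
  exact hf _ (by omega)

lemma projCLM_eq_self {U : Submodule ℂ L2} {hU : IsClosed (U : Set L2)} {f : L2}
    (hf : f ∈ U) : projCLM U hU f = f := by
  letI : CompleteSpace U := hU.completeSpace_coe
  exact Submodule.starProjection_eq_self_iff.2 hf

lemma projCLM_eq_zero_iff {U : Submodule ℂ L2} {hU : IsClosed (U : Set L2)} {f : L2} :
    projCLM U hU f = 0 ↔ f ∈ Uᗮ := by
  letI : CompleteSpace U := hU.completeSpace_coe
  constructor
  · intro h
    exact Submodule.orthogonalProjectionOnto_eq_zero_iff.1 (Submodule.coe_eq_zero.1 h)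
  · intro h
    have : U.orthogonalProjectionOnto f = 0 := Submodule.orthogonalProjectionOnto_eq_zero_iff.2 h
    show ((U.orthogonalProjectionOnto f : U) : L2) = 0
    rw [this]; rfl

lemma Pplus_eq_self {f : L2} (hf : f ∈ H2) : Pplus f = f := projCLM_eq_self hf

lemma Pplus_eq_zero {f : L2} (hf : f ∈ H2ᗮ) : Pplus f = 0 := projCLM_eq_zero_iff.2 hf

lemma Ptheta_eq_zero_iff {f : L2} : Ptheta θ f = 0 ↔ f ∈ (Kmod θ)ᗮ := projCLM_eq_zero_iff

lemma Kmod_le_H2 : Kmod θ ≤ H2 := inf_le_left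

lemma thetaH2_le_Kmod_orth : thetaH2 θ ≤ (Kmod θ)ᗮ := by
  intro v hv
  rw [Submodule.mem_orthogonal]
  intro u hu
  exact (Submodule.mem_orthogonal' _ _).1 (Submodule.mem_inf.1 hu).2 v hv

lemma H2_orth_le_Kmod_orth : H2ᗮ ≤ (Kmod θ)ᗮ :=
  Submodule.orthogonal_le Kmod_le_H2

lemma thetaH2_le_H2 (hθ : IsInner θ) : thetaH2 θ ≤ H2 := by
  rintro _ ⟨u, hu, rfl⟩
  exact mulLM_mem_H2 hθ hu

lemma thetaH2_eq_comap (hθ : MemLp θ ⊤ μ0) (hθu : ∀ᵐ x ∂μ0, ‖θ x‖ = 1) :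
    thetaH2 θ = H2.comap (mulLM (conjFun θ)) := by
  ext f
  constructor
  · rintro ⟨u, hu, rfl⟩
    have h : mulLM (conjFun θ) (mulLM θ u) = u := mulLM_conj_cancel hθ hθu u
    simpa [Submodule.mem_comap, h] using hu
  · intro hf
    exact ⟨mulLM (conjFun θ) f, hf, mulLM_cancel_conj hθ hθu f⟩

lemma isClosed_thetaH2 (hθ : MemLp θ ⊤ μ0) (hθu : ∀ᵐ x ∂μ0, ‖θ x‖ = 1) :
    IsClosed ((thetaH2 θ : Submodule ℂ L2) : Set L2) := by
  rw [thetaH2_eq_comap hθ hθu]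
  exact (isClosed_coeffGE 0).preimage (continuous_mulLM (memLp_conj hθ))

lemma inf_orth_le_thetaH2 (hθ : IsInner θ) :
    H2 ⊓ (Kmod θ)ᗮ ≤ thetaH2 θ := by
  have hcl := isClosed_thetaH2 hθ.memLinf hθ.unimodular
  letI : CompleteSpace (thetaH2 θ) := hcl.completeSpace_coe
  rintro u ⟨hu1, hu2⟩
  set P : L2 := ((thetaH2 θ).orthogonalProjectionOnto u : L2) with hP
  have hPmem : P ∈ thetaH2 θ := ((thetaH2 θ).orthogonalProjectionOnto u).2
  have hu' : u - P ∈ (thetaH2 θ)ᗮ := Submodule.sub_starProjection_mem_orthogonal (K := thetaH2 θ) u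
  have huH : u - P ∈ H2 := Submodule.sub_mem _ hu1 (thetaH2_le_H2 hθ hPmem)
  have huK : u - P ∈ Kmod θ := Submodule.mem_inf.2 ⟨huH, hu'⟩
  have h1 : ⟪u - P, u⟫_ℂ = 0 := (Submodule.mem_orthogonal _ _).1 hu2 _ huK
  have h2 : ⟪u - P, P⟫_ℂ = 0 := (Submodule.mem_orthogonal' _ _).1 hu' _ hPmem
  have h3 : ⟪u - P, u - P⟫_ℂ = 0 := by
    rw [inner_sub_right, h1, h2, sub_zero]
  have h4 : u - P = 0 := inner_self_eq_zero.1 h3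
  have : u = P := by rwa [sub_eq_zero] at h4
  rw [this]
  exact hPmem

lemma Kmod_orth_decomp (hθ : IsInner θ) {h : L2} (hh : h ∈ (Kmod θ)ᗮ) :
    ∃ hm hp : L2, hm ∈ H2ᗮ ∧ hp ∈ H2 ∧ h = hm + mulLM θ hp := by
  letI : CompleteSpace H2 := (isClosed_coeffGE 0).completeSpace_coe
  set P : L2 := (H2.orthogonalProjectionOnto h : L2) with hPdef
  have hPmem : P ∈ H2 := (H2.orthogonalProjectionOnto h).2
  have hm_mem : h - P ∈ H2ᗮ := Submodule.sub_starProjection_mem_orthogonal (K := H2) h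
  have hPK : P ∈ (Kmod θ)ᗮ := by
    rw [Submodule.mem_orthogonal]
    intro k hk
    have e1 : ⟪k, h⟫_ℂ = 0 := (Submodule.mem_orthogonal _ _).1 hh _ hk
    have e2 : ⟪k, h - P⟫_ℂ = 0 := by
      rw [← inner_conj_symm, (Submodule.mem_orthogonal' _ _).1 hm_mem _ (Kmod_le_H2 hk)]
      simp
    have := inner_sub_right (𝕜 := ℂ) k h P
    rw [e2, e1] at this
    simpa using this.symm
  have hPtheta : P ∈ thetaH2 θ := inf_orth_le_thetaH2 hθ ⟨hPmem, hPK⟩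
  obtain ⟨hp, hp_mem, hp_eq⟩ := hPtheta
  exact ⟨h - P, hp, hm_mem, hp_mem, by rw [hp_eq, sub_add_cancel]⟩

lemma zbar_decomp {f : L2} (hf : f ∈ H2) :
    ∃ u : L2, u ∈ H2 ∧ mulLM zbar f = u + cf f 0 • en (-1) := by
  refine ⟨mulLM zbar f - cf f 0 • en (-1), ?_, (sub_add_cancel _ _).symm⟩
  rw [mem_H2_iff]
  intro n hn
  rw [cf_sub, cf_smul, cf_mulLM_zbar, cf_en]
  rcases lt_or_ge (n + 1) 0 with h | h
  · rw [mem_H2_iff] at hf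
    rw [hf _ h, if_neg (by omega), mul_zero, sub_zero]
  · have hn1 : n = -1 := by omega
    subst hn1
    simp

lemma en_neg_one_mem_orth : en (-1) ∈ H2ᗮ := by
  rw [mem_H2_orth_iff]
  intro n hn
  rw [cf_en, if_neg (by omega)]

/-- The key rank-one defect formula: for `h ⊥ K_θ`,
`P_θ(z̄ h)` is a multiple of `P_θ(θ z̄)`. -/
lemma Ptheta_zbar_of_orth (hθ : IsInner θ) {h : L2} (hh : h ∈ (Kmod θ)ᗮ) :
    ∃ c : ℂ, Ptheta θ (mulLM zbar h) = c • Ptheta θ (mulLM θ (en (-1))) := by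
  obtain ⟨hm, hp, hm_mem, hp_mem, rfl⟩ := Kmod_orth_decomp hθ hh
  obtain ⟨u, hu_mem, hu_eq⟩ := zbar_decomp hp_mem
  refine ⟨cf hp 0, ?_⟩
  have e1 : mulLM zbar (hm + mulLM θ hp)
      = mulLM zbar hm + mulLM θ (mulLM zbar hp) := by
    rw [map_add]
    congr 1
    rw [mulLM_mulLM memLp_zbar hθ.memLinf, mulLM_mulLM hθ.memLinf memLp_zbar,
      show (fun x => zbar x * θ x) = fun x => θ x * zbar x from funext fun x => mul_comm _ _]
  rw [e1, hu_eq, map_add (mulLM θ), map_add, map_add, LinearMap.map_smul (mulLM θ),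
    ContinuousLinearMap.map_smul]
  have z1 : Ptheta θ (mulLM zbar hm) = 0 :=
    Ptheta_eq_zero_iff.2 (H2_orth_le_Kmod_orth (zbar_mem_H2_orth hm_mem))
  have z2 : Ptheta θ (mulLM θ u) = 0 :=
    Ptheta_eq_zero_iff.2 (thetaH2_le_Kmod_orth ⟨u, hu_mem, rfl⟩)
  rw [z1, z2]
  simp

lemma Sstar_eq_zbar {f : L2} (hf : mulLM zbar f ∈ H2) : Sstar f = mulLM zbar f := by
  show Pplus (mulLM zbar f) = mulLM zbar f
  exact Pplus_eq_self hf

lemma zbar_mem_Kmod (hθ : IsInner θ) {f : L2} (hf : f ∈ Kmod θ) (h0 : cf f 0 = 0) :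
    mulLM zbar f ∈ Kmod θ := by
  obtain ⟨hf1, hf2⟩ := Submodule.mem_inf.1 hf
  refine Submodule.mem_inf.2 ⟨zbar_mem_H2 hf1 h0, ?_⟩
  rw [Submodule.mem_orthogonal]
  rintro v ⟨u, hu, rfl⟩
  have key : ⟪mulLM θ u, mulLM zbar f⟫_ℂ
      = conj (⟪f, mulLM θ (mulLM zf u)⟫_ℂ) := by
    rw [← inner_conj_symm]
    congr 1
    rw [inner_mulLM_left memLp_zbar]
    congr 1
    have hc : conjFun zbar = zf := by
      funext x
      rw [conjFun, zbar, zf, ← fourier_neg, neg_neg]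
    rw [hc, mulLM_mulLM memLp_zf hθ.memLinf, mulLM_mulLM hθ.memLinf memLp_zf,
      show (fun x => zf x * θ x) = fun x => θ x * zf x from funext fun x => mul_comm _ _]
  rw [key]
  have : ⟪f, mulLM θ (mulLM zf u)⟫_ℂ = 0 := by
    rw [← inner_conj_symm]
    have h0' : ⟪mulLM θ (mulLM zf u), f⟫_ℂ = 0 :=
      (Submodule.mem_orthogonal _ _).1 hf2 _ ⟨mulLM zf u, zf_mem_H2 hu, rfl⟩
    rw [h0']
    simp
  rw [this]
  simp

section Multiband
variable {g φ ψ : Tc → ℂ}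

lemma mem_map_orth_iff {w : Tc → ℂ} {u : L2} :
    u ∈ ((Kmod θ).map (mulLM w))ᗮ ↔ ∀ k ∈ Kmod θ, ⟪mulLM w k, u⟫_ℂ = 0 := by
  rw [Submodule.mem_orthogonal]
  constructor
  · intro h k hk; exact h _ ⟨k, hk, rfl⟩
  · rintro h v ⟨k, hk, rfl⟩; exact h k hk

lemma mem_multiband_orth_iff {u : L2} :
    u ∈ (multiband θ φ ψ)ᗮ ↔
      (∀ k ∈ Kmod θ, ⟪mulLM φ k, u⟫_ℂ = 0) ∧ ∀ k ∈ Kmod θ, ⟪mulLM ψ k, u⟫_ℂ = 0 := by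
  rw [multiband, ← Submodule.inf_orthogonal, Submodule.mem_inf,
    mem_map_orth_iff, mem_map_orth_iff]

lemma rowLM_apply2 (G : Matrix (Fin 2) (Fin 2) (Tc → ℂ)) (i : Fin 2) (F : Vec 2) :
    rowLM G i F = mulLM (G i 0) (F 0) + mulLM (G i 1) (F 1) := by
  simp [rowLM, compLM, Fin.sum_univ_two, LinearMap.coe_mk, AddHom.coe_mk]
  rfl

lemma Gmb_00 : Gmb g φ ψ 0 0 = g := rfl
lemma Gmb_01 : Gmb g φ ψ 0 1 = fun x => g x * conjFun φ x * ψ x := rfl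
lemma Gmb_10 : Gmb g φ ψ 1 0 = fun x => g x * conjFun ψ x * φ x := rfl
lemma Gmb_11 : Gmb g φ ψ 1 1 = g := rfl

lemma conj_row {α β : Tc → ℂ} (hg : MemLp g ⊤ μ0) (hα : MemLp α ⊤ μ0)
    (hβ : MemLp β ⊤ μ0) (hαu : ∀ᵐ x ∂μ0, ‖α x‖ = 1) (f₁ f₂ : L2) :
    mulLM (conjFun α) (mulLM g (mulLM α f₁ + mulLM β f₂))
      = mulLM g f₁ + mulLM (fun x => g x * conjFun α x * β x) f₂ := by
  apply Lp.ext
  filter_upwards [mulLM_coeFn (memLp_conj hα) (mulLM g (mulLM α f₁ + mulLM β f₂)),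
    mulLM_coeFn hg (mulLM α f₁ + mulLM β f₂),
    Lp.coeFn_add (mulLM α f₁) (mulLM β f₂),
    mulLM_coeFn hα f₁, mulLM_coeFn hβ f₂,
    Lp.coeFn_add (mulLM g f₁) (mulLM (fun x => g x * conjFun α x * β x) f₂),
    mulLM_coeFn hg f₁,
    mulLM_coeFn (memLp_mul (memLp_mul hg (memLp_conj hα)) hβ) f₂,
    hαu] with x h1 h2 h3 h4 h5 h6 h7 h8 h9
  rw [h1, h2, h3, Pi.add_apply, h4, h5, h6, Pi.add_apply, h7, h8]
  have hc : conj (α x) * α x = 1 := unimod_conj_mul h9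
  simp only [conjFun]
  linear_combination (g x * (f₁ : Tc → ℂ) x) * hc

lemma mem_Kv2_iff {F : Vec 2} : F ∈ Kv θ 2 ↔ ∀ i, F i ∈ Kmod θ := by
  simp [Kv, Submodule.mem_iInf, Submodule.mem_comap, compLM, LinearMap.coe_mk, AddHom.coe_mk]
  rfl

lemma mem_kerAv_iff {G : Matrix (Fin 2) (Fin 2) (Tc → ℂ)} {F : Vec 2} :
    F ∈ kerAv θ G ↔ F ∈ Kv θ 2 ∧ ∀ i, rowLM G i F ∈ (Kmod θ)ᗮ := by
  simp [kerAv, Submodule.mem_inf, Submodule.mem_iInf, Submodule.mem_comap]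

lemma part3
    (hθ : IsInner θ) (hg : MemLp g ⊤ μ0)
    (hφ : MemLp φ ⊤ μ0) (hψ : MemLp ψ ⊤ μ0)
    (hφu : ∀ᵐ x ∂μ0, ‖φ x‖ = 1) (hψu : ∀ᵐ x ∂μ0, ‖ψ x‖ = 1)
    {f₁ f₂ : L2} (h₁ : f₁ ∈ Kmod θ) (h₂ : f₂ ∈ Kmod θ) :
    mulLM φ f₁ + mulLM ψ f₂ ∈ kerAM θ φ ψ g ↔
      (WithLp.toLp 2 ![f₁, f₂] : Vec 2) ∈ kerAv θ (Gmb g φ ψ) := by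
  have hv0 : (WithLp.toLp 2 ![f₁, f₂] : Vec 2) 0 = f₁ := rfl
  have hv1 : (WithLp.toLp 2 ![f₁, f₂] : Vec 2) 1 = f₂ := rfl
  have hrow0 : rowLM (Gmb g φ ψ) 0 (WithLp.toLp 2 ![f₁, f₂] : Vec 2)
      = mulLM (conjFun φ) (mulLM g (mulLM φ f₁ + mulLM ψ f₂)) := by
    rw [rowLM_apply2, hv0, hv1, Gmb_00, Gmb_01, conj_row hg hφ hψ hφu]
  have hrow1 : rowLM (Gmb g φ ψ) 1 (WithLp.toLp 2 ![f₁, f₂] : Vec 2)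
      = mulLM (conjFun ψ) (mulLM g (mulLM φ f₁ + mulLM ψ f₂)) := by
    rw [rowLM_apply2, hv0, hv1, Gmb_10, Gmb_11,
      show mulLM φ f₁ + mulLM ψ f₂ = mulLM ψ f₂ + mulLM φ f₁ from add_comm _ _,
      conj_row hg hψ hφ hψu f₂ f₁, add_comm]
  have key : ∀ (α : Tc → ℂ), MemLp α ⊤ μ0 → ∀ k u : L2,
      ⟪mulLM α k, u⟫_ℂ = ⟪k, mulLM (conjFun α) u⟫_ℂ := fun α hα k u =>
    inner_mulLM_left hα k u
  constructor
  · intro hker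
    obtain ⟨-, horth⟩ := Submodule.mem_inf.1 hker
    rw [Submodule.mem_comap, mem_multiband_orth_iff] at horth
    rw [mem_kerAv_iff]
    refine ⟨mem_Kv2_iff.2 ?_, ?_⟩
    · intro i; fin_cases i
      · exact h₁
      · exact h₂
    · intro i; fin_cases i
      · rw [Submodule.mem_orthogonal]
        intro k hk
        rw [show (⟨0, by omega⟩ : Fin 2) = 0 from rfl, hrow0, ← key φ hφ]
        exact horth.1 k hk
      · rw [Submodule.mem_orthogonal]
        intro k hk
        rw [show (⟨1, by omega⟩ : Fin 2) = 1 from rfl, hrow1, ← key ψ hψ]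
        exact horth.2 k hk
  · intro hF
    rw [mem_kerAv_iff] at hF
    refine Submodule.mem_inf.2 ⟨Submodule.add_mem_sup (Submodule.mem_map_of_mem h₁)
      (Submodule.mem_map_of_mem h₂), ?_⟩
    rw [Submodule.mem_comap, mem_multiband_orth_iff]
    constructor
    · intro k hk
      rw [key φ hφ, ← hrow0]
      exact (Submodule.mem_orthogonal _ _).1 (hF.2 0) _ hk
    · intro k hk
      rw [key ψ hψ, ← hrow1]
      exact (Submodule.mem_orthogonal _ _).1 (hF.2 1) _ hk

end Multiband

section Part4

instance : CompleteSpace (Vec 2) := inferInstance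

variable {G : Matrix (Fin 2) (Fin 2) (Tc → ℂ)}

/-- The matrix truncated Toeplitz operator `A_G^θ` as a linear map on `L²(𝕋, ℂ²)`. -/
def PhiLM (θ : Tc → ℂ) (G : Matrix (Fin 2) (Fin 2) (Tc → ℂ)) : Vec 2 →ₗ[ℂ] Vec 2 where
  toFun F := WithLp.toLp 2 (fun i => Ptheta θ (rowLM G i F))
  map_add' F₁ F₂ := by
    refine PiLp.ext fun i => ?_
    show Ptheta θ (rowLM G i (F₁ + F₂)) = Ptheta θ (rowLM G i F₁) + Ptheta θ (rowLM G i F₂)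
    rw [map_add, map_add]
  map_smul' a F := by
    refine PiLp.ext fun i => ?_
    show Ptheta θ (rowLM G i (a • F)) = a • Ptheta θ (rowLM G i F)
    rw [LinearMap.map_smul (rowLM G i), ContinuousLinearMap.map_smul]

lemma PhiLM_apply (F : Vec 2) (i : Fin 2) :
    PhiLM θ G F i = Ptheta θ (rowLM G i F) := rfl

lemma PhiLM_eq_zero_iff {F : Vec 2} :
    PhiLM θ G F = 0 ↔ ∀ i, rowLM G i F ∈ (Kmod θ)ᗮ := by
  constructor
  · intro h i
    have : PhiLM θ G F i = 0 := by rw [h]; rfl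
    rw [PhiLM_apply] at this
    exact Ptheta_eq_zero_iff.1 this
  · intro h
    refine PiLp.ext fun i => ?_
    exact Ptheta_eq_zero_iff.2 (h i)

lemma mem_kerAv_iff' {F : Vec 2} :
    F ∈ kerAv θ G ↔ F ∈ Kv θ 2 ∧ PhiLM θ G F = 0 := by
  rw [mem_kerAv_iff, PhiLM_eq_zero_iff]

lemma continuous_rowLM (hG : ∀ i j, MemLp (G i j) ⊤ μ0) (i : Fin 2) :
    Continuous fun F : Vec 2 => rowLM G i F := by
  have h : (fun F : Vec 2 => rowLM G i F)
      = fun F : Vec 2 => mulLM (G i 0) (F 0) + mulLM (G i 1) (F 1) := by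
    funext F; exact rowLM_apply2 G i F
  rw [h]
  exact (((continuous_mulLM (hG i 0)).comp (PiLp.continuous_apply 2 _ (0 : Fin 2)))).add
    (((continuous_mulLM (hG i 1)).comp (PiLp.continuous_apply 2 _ (1 : Fin 2))))

lemma isClosed_kerAv (hG : ∀ i j, MemLp (G i j) ⊤ μ0) :
    IsClosed ((kerAv θ G : Submodule ℂ (Vec 2)) : Set (Vec 2)) := by
  have h : ((kerAv θ G : Submodule ℂ (Vec 2)) : Set (Vec 2)) =
      (⋂ i : Fin 2, (fun F : Vec 2 => F i) ⁻¹' ((Kmod θ : Submodule ℂ L2) : Set L2)) ∩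
      ⋂ i : Fin 2, (fun F : Vec 2 => rowLM G i F) ⁻¹'
        (((Kmod θ)ᗮ : Submodule ℂ L2) : Set L2) := by
    ext F
    simp only [Set.mem_inter_iff, Set.mem_iInter, Set.mem_preimage, SetLike.mem_coe]
    rw [show (F ∈ kerAv θ G) ↔ _ from mem_kerAv_iff, mem_Kv2_iff]
  rw [h]
  refine IsClosed.inter (isClosed_iInter fun i => ?_) (isClosed_iInter fun i => ?_)
  · exact (isClosed_Kmod θ).preimage (PiLp.continuous_apply 2 _ i)
  · exact ((Kmod θ).isClosed_orthogonal).preimage (continuous_rowLM hG i)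

set_option synthInstance.maxHeartbeats 1000000 in
lemma part4 (hθ : IsInner θ) (hG : ∀ i j, MemLp (G i j) ⊤ μ0) :
    ∃ E : Submodule ℂ (Vec 2), Module.finrank ℂ E ≤ 2 ∧
      E ≤ (kerAv θ G)ᗮ ∧
      ∀ F ∈ kerAv θ G, ev0 F = 0 → SstarV F ∈ kerAv θ G ⊔ E := by
  classical
  set w : L2 := Ptheta θ (mulLM θ (en (-1))) with hw
  set pair : (Fin 2 → ℂ) →ₗ[ℂ] Vec 2 :=
    { toFun := fun c => (WithLp.toLp 2 (fun i => c i • w) : Vec 2)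
      map_add' := fun c d => by refine PiLp.ext fun i => ?_; exact add_smul _ _ _
      map_smul' := fun a c => by refine PiLp.ext fun i => ?_; exact mul_smul _ _ _ } with hpair
  set W : Submodule ℂ (Vec 2) := LinearMap.range pair with hW
  haveI : FiniteDimensional ℂ W := inferInstance
  have hWrank : Module.finrank ℂ W ≤ 2 := by
    have := LinearMap.finrank_range_le pair
    rwa [Module.finrank_fin_fun] at this
  set N : Submodule ℂ (Vec 2) := Kv θ 2 ⊓ Submodule.comap (PhiLM θ G) W with hN
  have hkerN : kerAv θ G ≤ N := by
    intro x hx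
    obtain ⟨hx1, hx2⟩ := mem_kerAv_iff'.1 hx
    refine Submodule.mem_inf.2 ⟨hx1, Submodule.mem_comap.2 ?_⟩
    rw [hx2]
    exact W.zero_mem
  set E : Submodule ℂ (Vec 2) := N ⊓ (kerAv θ G)ᗮ with hE
  have hEorth : E ≤ (kerAv θ G)ᗮ := inf_le_right
  -- finrank E ≤ 2
  have hinj : ∀ x : Vec 2, x ∈ E → PhiLM θ G x = 0 → x = 0 := by
    intro x hx hx0
    obtain ⟨hxN, hxO⟩ := Submodule.mem_inf.1 hx
    have hker : x ∈ kerAv θ G :=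
      mem_kerAv_iff'.2 ⟨(Submodule.mem_inf.1 hxN).1, hx0⟩
    exact inner_self_eq_zero.1 ((Submodule.mem_orthogonal _ _).1 hxO x hker)
  set Ψ : E →ₗ[ℂ] W :=
    LinearMap.codRestrict W ((PhiLM θ G).domRestrict E)
      (fun x => Submodule.mem_comap.1 (Submodule.mem_inf.1
        (Submodule.mem_inf.1 x.2).1).2) with hΨ
  have hΨinj : Function.Injective Ψ := by
    intro x y hxy
    have h0 : PhiLM θ G ((x : Vec 2) - (y : Vec 2)) = 0 := by
      have hco : PhiLM θ G (x : Vec 2) = PhiLM θ G (y : Vec 2) :=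
        congrArg (fun z : W => (z : Vec 2)) hxy
      rw [map_sub, hco, sub_self]
    have := hinj ((x : Vec 2) - (y : Vec 2)) (E.sub_mem x.2 y.2) h0
    exact Subtype.ext (by rwa [sub_eq_zero] at this)
  have hErank : Module.finrank ℂ E ≤ 2 :=
    le_trans (LinearMap.finrank_le_finrank_of_injective hΨinj) hWrank
  refine ⟨E, hErank, hEorth, ?_⟩
  intro F hF hF0
  obtain ⟨hFv, hFr⟩ := mem_kerAv_iff.1 hF
  have hFK : ∀ i, F i ∈ Kmod θ := mem_Kv2_iff.1 hFv
  have hF0' : ∀ i : Fin 2, cf (F i) 0 = 0 := fun i => congrArg (fun v : EuclideanSpace ℂ (Fin 2) => v i) hF0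
  have hSi : ∀ i, Sstar (F i) = mulLM zbar (F i) := fun i =>
    Sstar_eq_zbar (zbar_mem_H2 (Kmod_le_H2 (hFK i)) (hF0' i))
  have hSV : SstarV F = (WithLp.toLp 2 (fun i => mulLM zbar (F i)) : Vec 2) := by refine PiLp.ext fun i => ?_; exact hSi i
  have h1 : SstarV F ∈ Kv θ 2 := by
    rw [hSV]
    exact mem_Kv2_iff.2 fun i => zbar_mem_Kmod hθ (hFK i) (hF0' i)
  have hrow : ∀ i, rowLM G i (SstarV F) = mulLM zbar (rowLM G i F) := by
    intro i
    rw [hSV, rowLM_apply2, rowLM_apply2, map_add]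
    show mulLM (G i 0) (mulLM zbar (F 0)) + mulLM (G i 1) (mulLM zbar (F 1)) = _
    congr 1
    · rw [mulLM_mulLM (hG i 0) memLp_zbar, mulLM_mulLM memLp_zbar (hG i 0),
        show (fun x => G i 0 x * zbar x) = fun x => zbar x * G i 0 x from
          funext fun x => mul_comm _ _]
    · rw [mulLM_mulLM (hG i 1) memLp_zbar, mulLM_mulLM memLp_zbar (hG i 1),
        show (fun x => G i 1 x * zbar x) = fun x => zbar x * G i 1 x from
          funext fun x => mul_comm _ _]
  have hc : ∀ i : Fin 2, ∃ c : ℂ, Ptheta θ (mulLM zbar (rowLM G i F)) = c • w :=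
    fun i => Ptheta_zbar_of_orth hθ (hFr i)
  choose c hcspec using hc
  have hΦW : PhiLM θ G (SstarV F) ∈ W := by
    refine ⟨c, ?_⟩
    refine PiLp.ext fun i => ?_
    show c i • w = Ptheta θ (rowLM G i (SstarV F))
    rw [hrow i, hcspec i]
  have hNmem : SstarV F ∈ N := Submodule.mem_inf.2 ⟨h1, Submodule.mem_comap.2 hΦW⟩
  letI : CompleteSpace (kerAv θ G) := (isClosed_kerAv hG).completeSpace_coe
  set y : Vec 2 := ((kerAv θ G).orthogonalProjectionOnto (SstarV F) : Vec 2) with hy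
  have hymem : y ∈ kerAv θ G := ((kerAv θ G).orthogonalProjectionOnto (SstarV F)).2
  have hzmem : SstarV F - y ∈ E := Submodule.mem_inf.2
    ⟨Submodule.sub_mem _ hNmem (hkerN hymem),
      Submodule.sub_starProjection_mem_orthogonal (K := kerAv θ G) _⟩
  have hdecomp : SstarV F = y + (SstarV F - y) := by abel
  rw [hdecomp]
  exact Submodule.add_mem_sup hymem hzmem

end Part4

end Tool
open scoped InnerProductSpace

/-- **(Section 6).**  For unimodular `φ, ψ ∈ L^∞` with `φK_θ ⊥ ψK_θ`, the map
`U : φK_θ ⊕ ψK_θ → K_θ(𝔻, ℂ²)`, `φf₁ + ψf₂ ↦ (f₁, f₂)`, is unitary and identifies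
`ker A_g^M` with `ker A_G^θ`, where `G = [[A_g^θ, A_{gφ̄ψ}^θ], [A_{gψ̄φ}^θ, A_g^θ]]`-style
matrix symbol `Gmb g φ ψ`; in particular `U(ker A_g^M)` is nearly `S*`-invariant with
defect `2`. -/
theorem multiband_kernel_unitarily_equivalent
    (θ g φ ψ : Tc → ℂ) (hθ : IsInner θ) (hg : MemLp g ⊤ μ0)
    (hφ : MemLp φ ⊤ μ0) (hψ : MemLp ψ ⊤ μ0)
    (hφu : ∀ᵐ x ∂μ0, ‖φ x‖ = 1) (hψu : ∀ᵐ x ∂μ0, ‖ψ x‖ = 1)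
    (hperp : (Kmod θ).map (mulLM φ) ≤ ((Kmod θ).map (mulLM ψ))ᗮ) :
    -- `U` is unitary: it is isometric (hence injective and well defined) …
    (∀ f₁ ∈ Kmod θ, ∀ f₂ ∈ Kmod θ,
        ‖mulLM φ f₁ + mulLM ψ f₂‖ ^ 2 = ‖f₁‖ ^ 2 + ‖f₂‖ ^ 2) ∧
    -- … and every element of `M` has the form `φf₁ + ψf₂` (so `U` is onto `K_θ(𝔻, ℂ²)`)
    (∀ h ∈ multiband θ φ ψ, ∃ f₁ ∈ Kmod θ, ∃ f₂ ∈ Kmod θ,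
        h = mulLM φ f₁ + mulLM ψ f₂) ∧
    -- `ker A_g^M = U* (ker A_G^θ)`
    (∀ f₁ ∈ Kmod θ, ∀ f₂ ∈ Kmod θ,
        (mulLM φ f₁ + mulLM ψ f₂ ∈ kerAM θ φ ψ g ↔
          (WithLp.toLp 2 ![f₁, f₂] : Vec 2) ∈ kerAv θ (Gmb g φ ψ))) ∧
    -- `U(ker A_g^M) = ker A_G^θ` is nearly `S*`-invariant with defect `2`
    (∃ E : Submodule ℂ (Vec 2), Module.finrank ℂ E ≤ 2 ∧
        E ≤ (kerAv θ (Gmb g φ ψ))ᗮ ∧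
        ∀ F ∈ kerAv θ (Gmb g φ ψ), ev0 F = 0 →
          SstarV F ∈ kerAv θ (Gmb g φ ψ) ⊔ E) := by
  refine ⟨?_, ?_, ?_, ?_⟩
  · intro f₁ h₁ f₂ h₂
    have horth : ⟪mulLM φ f₁, mulLM ψ f₂⟫_ℂ = 0 := by
      have h := (Submodule.mem_orthogonal _ _).1
        (hperp (Submodule.mem_map_of_mem h₁)) _ (Submodule.mem_map_of_mem h₂)
      rw [← inner_conj_symm, h, map_zero]
    rw [@norm_add_sq ℂ, horth, norm_mulLM hφ hφu, norm_mulLM hψ hψu]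
    simp
  · intro h hh
    obtain ⟨y, hy, z, hz, hyz⟩ := Submodule.mem_sup.1 hh
    obtain ⟨f₁, hf₁, rfl⟩ := hy
    obtain ⟨f₂, hf₂, rfl⟩ := hz
    exact ⟨f₁, hf₁, f₂, hf₂, hyz.symm⟩
  · intro f₁ h₁ f₂ h₂
    exact part3 hθ hg hφ hψ hφu hψu h₁ h₂
  · exact part4 hθ (by intro i j; fin_cases i <;> fin_cases j <;> first
      | exact hg
      | exact memLp_mul (memLp_mul hg (memLp_conj hφ)) hψ
      | exact memLp_mul (memLp_mul hg (memLp_conj hψ)) hφ)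

end Paper
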